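/- Let A be a unital associative ℂ-algebra endowed with an involution a ↦ a*. If for every self-adjoint element a = a* ∈ A one has −1 ∉ σ_A(a²), then A is hermitian, i.e. σ_A(a) ⊆ ℝ for every a = a* ∈ A. -/

import Mathlib

/-- If a unital associative ℂ-algebra with involution satisfies
`-1 ∉ σ(a²)` for every self-adjoint `a`, then it is hermitian:
the spectrum of every self-adjoint element is real. -/
theorem stmt_0 (A : Type*) [Ring A] [Algebra ℂ A] [StarRing A] [StarModule ℂ A]
    (h : ∀ a : A, star a = a → (-1 : ℂ) ∉ spectrum ℂ (a ^ 2)) :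
    ∀ a : A, star a = a → ∀ z ∈ spectrum ℂ a, z.im = 0 := by
  intro a ha z hz
  by_contra hy
  set x : ℂ := (z.re : ℂ)
  set y : ℂ := (z.im : ℂ)
  have hy' : y ≠ 0 := by
    simpa [y] using hy
  have hyu : IsUnit y⁻¹ := (isUnit_iff_ne_zero.mpr (inv_ne_zero hy'))
  set b : A := y⁻¹ • (a - algebraMap ℂ A x) with hb
  have hbsa : star b = b := by
    rw [hb, star_smul, star_sub, ha]
    have : star (algebraMap ℂ A x) = algebraMap ℂ A x := by
      rw [← algebraMap_star_comm]
      simp [x, Complex.conj_ofReal]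
    rw [this]
    simp [y, star_inv₀, Complex.conj_ofReal]
  -- z - x ∈ σ (a - x·1)
  have h1 : z - x ∈ spectrum ℂ (a - algebraMap ℂ A x) := by
    rw [← spectrum.sub_singleton_eq]
    exact Set.sub_mem_sub hz rfl
  -- I ∈ σ b
  have h2 : Complex.I ∈ spectrum ℂ b := by
    have h2' := (spectrum.smul_mem_smul_iff (a := a - algebraMap ℂ A x)
      (s := z - x) (r := hyu.unit)).mpr h1
    simp only [Units.smul_def, IsUnit.unit_spec] at h2'
    have heq : y⁻¹ • (z - x) = Complex.I := by
      have hzeq : z = x + y * Complex.I := by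
        simpa [x, y] using (Complex.re_add_im z).symm
      rw [smul_eq_mul, hzeq]
      field_simp
      ring
    rw [hb, ← heq]
    exact h2'
  -- -1 ∈ σ (b²)
  have h3 : (-1 : ℂ) ∈ spectrum ℂ (b ^ 2) := by
    have := spectrum.pow_image_subset (𝕜 := ℂ) b 2
    have : Complex.I ^ 2 ∈ spectrum ℂ (b ^ 2) := this ⟨Complex.I, h2, rfl⟩
    simpa [Complex.I_sq] using this
  exact h b hbsa h3
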